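/- Let f ∈ Γ be differentiable with nondecreasing positive derivative f', and let g = f/f' be its auxiliary function. Then the inverse function f^{-1} is slowly varying, and for every λ > 0, (f^{-1}(λx) − f^{-1}(x))/g(f^{-1}(x)) → ln λ as x → ∞. -/

import Mathlib

open Filter Set

/-- For `f ∈ Γ` with nondecreasing positive derivative and auxiliary function
`g = f/f'`, the inverse `f⁻¹` is slowly varying and
`(f⁻¹(λx) − f⁻¹(x))/g(f⁻¹(x)) → ln λ`. -/
theorem stmt_13 (f finv : ℝ → ℝ)
    (hfpos : ∀ x, 0 < f x)
    (hdiff : Differentiable ℝ f)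
    (hf'pos : ∀ x, 0 < deriv f x)
    (hf'mono : Monotone (deriv f))
    (hΓ : ∀ u : ℝ, Tendsto (fun x => f (x + u * (f x / deriv f x)) / f x) atTop
      (nhds (Real.exp u)))
    (hfinv : Tendsto finv atTop atTop)
    (hinv : ∀ᶠ y in atTop, f (finv y) = y) :
    (∀ l > 0, Tendsto (fun x => finv (l * x) / finv x) atTop (nhds 1)) ∧
      (∀ l > 0, Tendsto
        (fun x => (finv (l * x) - finv x) / (f (finv x) / deriv f (finv x)))
        atTop (nhds (Real.log l))) := by
  set g : ℝ → ℝ := fun x => f x / deriv f x with hg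
  have hgpos : ∀ x, 0 < g x := fun x => div_pos (hfpos x) (hf'pos x)
  have hmono : StrictMono f := by
    apply strictMono_of_deriv_pos hf'pos
  -- f tends to infinity
  have hftop : Tendsto f atTop atTop := by
    rcases tendsto_of_monotone hmono.monotone with h | ⟨L, hL⟩
    · exact h
    · exfalso
      have hL0 : 0 < L := by
        have : f 0 ≤ L := by
          apply ge_of_tendsto hL
          filter_upwards [eventually_ge_atTop (0:ℝ)] with x hx
          exact hmono.monotone hx
        linarith [hfpos 0]
      have h1 : Tendsto (fun x => f (x + 1 * g x)) atTop (nhds L) := by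
        apply hL.comp
        apply tendsto_atTop_mono (fun x => ?_) tendsto_id
        have := hgpos x
        simp only [id]
        nlinarith
      have h2 : Tendsto (fun x => f (x + 1 * g x) / f x) atTop (nhds (L / L)) :=
        h1.div hL hL0.ne'
      have h3 : Real.exp 1 = L / L := tendsto_nhds_unique (hΓ 1) h2
      rw [div_self hL0.ne'] at h3
      nlinarith [Real.exp_one_gt_d9]
  -- g(x)/x → 0
  have hgo : Tendsto (fun x => g x / x) atTop (nhds 0) := by
    rw [tendsto_order]
    constructor
    · intro a ha
      filter_upwards [eventually_gt_atTop (0:ℝ)] with x hx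
      exact lt_trans ha (div_pos (hgpos x) hx)
    · intro b hb
      by_contra hcon
      rw [not_eventually] at hcon
      set u : ℝ := -(2 / b) with hu
      have hev1 : ∀ᶠ x in atTop, Real.exp u / 2 < f (x + u * g x) / f x :=
        (hΓ u).eventually (eventually_gt_nhds (half_lt_self (Real.exp_pos u)))
      have hev2 : ∀ᶠ x in atTop, f 0 < Real.exp u / 2 * f x := by
        have := hftop.eventually (eventually_gt_atTop (2 * f 0 / Real.exp u))
        filter_upwards [this] with x hx
        have hexp := Real.exp_pos u
        rw [div_lt_iff₀ hexp] at hx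
        nlinarith
      obtain ⟨x, hbx, h1, h2, hx0⟩ :=
        (hcon.and_eventually (hev1.and (hev2.and (eventually_gt_atTop (0:ℝ))))).exists
      push_neg at hbx
      have hgx : b * x ≤ g x := by
        rw [le_div_iff₀ hx0] at hbx; linarith
      have hle : x + u * g x ≤ 0 := by
        have h2x : 2 * x ≤ (2 / b) * g x := by
          calc 2 * x = (2 / b) * (b * x) := by field_simp
            _ ≤ (2 / b) * g x := by
                apply mul_le_mul_of_nonneg_left hgx (by positivity)
        rw [hu]; nlinarith
      have hf0 : f (x + u * g x) ≤ f 0 := hmono.monotone hle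
      have : Real.exp u / 2 * f x < f (x + u * g x) := by
        rw [lt_div_iff₀ (hfpos x)] at h1
        linarith
      linarith
  -- key limit
  have key : ∀ l : ℝ, 0 < l →
      Tendsto (fun y => (finv (l * y) - finv y) / g (finv y)) atTop (nhds (Real.log l)) := by
    intro l hl
    have hmul : Tendsto (fun y : ℝ => l * y) atTop atTop := by
      apply Tendsto.const_mul_atTop hl tendsto_id
    have hinvl : ∀ᶠ y in atTop, f (finv (l * y)) = l * y := hmul.eventually hinv
    rw [tendsto_order]
    constructor
    · intro a ha
      have hea : Real.exp a < l := by
        calc Real.exp a < Real.exp (Real.log l) := Real.exp_lt_exp.2 ha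
        _ = l := Real.exp_log hl
      have hA := ((hΓ a).comp hfinv).eventually (eventually_lt_nhds hea)
      filter_upwards [hA, hinv, hinvl] with y h1 h2 h3
      simp only [Function.comp] at h1
      have hz := hgpos (finv y)
      have hfz := hfpos (finv y)
      rw [div_lt_iff₀ hfz] at h1
      have h1' : f (finv y + a * g (finv y)) < l * f (finv y) := h1
      have hlt : finv y + a * g (finv y) < finv (l * y) := by
        apply hmono.lt_iff_lt.1
        calc f (finv y + a * g (finv y)) < l * f (finv y) := h1'
          _ = l * y := by rw [h2]
          _ = f (finv (l * y)) := h3.symm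
      rw [lt_div_iff₀ hz]
      linarith
    · intro b hb
      have heb : l < Real.exp b := by
        calc l = Real.exp (Real.log l) := (Real.exp_log hl).symm
        _ < Real.exp b := Real.exp_lt_exp.2 hb
      have hB := ((hΓ b).comp hfinv).eventually (eventually_gt_nhds heb)
      filter_upwards [hB, hinv, hinvl] with y h1 h2 h3
      simp only [Function.comp] at h1
      have hz := hgpos (finv y)
      have hfz := hfpos (finv y)
      rw [lt_div_iff₀ hfz] at h1
      have h1' : l * f (finv y) < f (finv y + b * g (finv y)) := h1
      have hlt : finv (l * y) < finv y + b * g (finv y) := by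
        apply hmono.lt_iff_lt.1
        calc f (finv (l * y)) = l * y := h3
          _ = l * f (finv y) := by rw [h2]
          _ < _ := h1'
      rw [div_lt_iff₀ hz]
      linarith
  constructor
  · intro l hl
    have h0 : Tendsto (fun y => g (finv y) / finv y) atTop (nhds 0) := hgo.comp hfinv
    have hprod := (key l hl).mul h0
    rw [mul_zero] at hprod
    have hfin : Tendsto (fun y => 1 + (finv (l * y) - finv y) / g (finv y) * (g (finv y) / finv y))
        atTop (nhds 1) := by
      simpa using (tendsto_const_nhds (x := (1:ℝ)) (f := atTop)).add hprod
    apply hfin.congr'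
    filter_upwards [hfinv.eventually (eventually_gt_atTop (0:ℝ))] with y hy
    have hz := hgpos (finv y)
    field_simp
    ring
  · intro l hl
    exact key l hl
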